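/- For every integer n ≥ 1, the function f(j) = ∑_{i=0}^{n-1} ( (i+1)/(n+1) · j^i (j-1)^{n-1-i} + (n-i)/(n+1) · (j+1)^i j^{n-1-i} ) is a polynomial in j with f(j) = n·j^{n-1} + O(j^{n-3}); precisely, f(j) - n·j^{n-1} is a polynomial of degree at most n-3 in j. -/

import Mathlib

open Polynomial Finset

private lemma coeff_aux1 (a : ℝ) (s t m : ℕ) :
    ((X : ℝ[X]) ^ t * (X + C a) ^ s).coeff m =
      if t ≤ m then a ^ (s - (m - t)) * (s.choose (m - t) : ℝ) else 0 := by
  rw [coeff_X_pow_mul']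
  split_ifs with h
  · rw [coeff_X_add_C_pow]
  · rfl

private lemma coeff_aux2 (a : ℝ) (s t m : ℕ) :
    (((X : ℝ[X]) + C a) ^ s * X ^ t).coeff m =
      if t ≤ m then a ^ (s - (m - t)) * (s.choose (m - t) : ℝ) else 0 := by
  rw [coeff_mul_X_pow']
  split_ifs with h
  · rw [coeff_X_add_C_pow]
  · rfl

theorem stmt_8 (n : ℕ) (hn : 1 ≤ n) :
    ∃ p : Polynomial ℝ, p.degree ≤ (n - 3 : ℕ) ∧
      ∀ j : ℝ,
        (∑ i ∈ Finset.range n,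
            (((i : ℝ) + 1) / (n + 1) * (j ^ i * (j - 1) ^ (n - 1 - i)) +
              ((n : ℝ) - i) / (n + 1) * ((j + 1) ^ i * j ^ (n - 1 - i)))) =
          n * j ^ (n - 1) + p.eval j := by
  have hX1 : (X - 1 : ℝ[X]) = X + C (-1) := by rw [Polynomial.C_neg, Polynomial.C_1]; ring
  have hX2 : (X + 1 : ℝ[X]) = X + C 1 := by rw [Polynomial.C_1]
  have hn1 : ((n : ℝ) + 1) ≠ 0 := by positivity
  refine ⟨(∑ i ∈ Finset.range n,
      (C (((i : ℝ) + 1) / ((n : ℝ) + 1)) * ((X : ℝ[X]) ^ i * (X - 1) ^ (n - 1 - i)) +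
        C (((n : ℝ) - (i : ℝ)) / ((n : ℝ) + 1)) * (((X : ℝ[X]) + 1) ^ i * X ^ (n - 1 - i))))
      - C (n : ℝ) * X ^ (n - 1), ?_, ?_⟩
  · rw [Polynomial.degree_le_iff_coeff_zero]
    intro m hm
    have hm' : n - 3 < m := by exact_mod_cast hm
    simp only [coeff_sub, finset_sum_coeff, coeff_add, coeff_C_mul, hX1, hX2,
      coeff_aux1, coeff_aux2, coeff_X_pow]
    rcases (show n ≤ m ∨ m + 1 = n ∨ m + 2 = n by omega) with h | h | h
    · have h1 : ¬ (m = n - 1) := by omega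
      rw [if_neg h1, mul_zero, sub_zero]
      refine Finset.sum_eq_zero fun i hi => ?_
      simp only [Finset.mem_range] at hi
      rw [if_pos (by omega : i ≤ m), if_pos (by omega : n - 1 - i ≤ m),
        Nat.choose_eq_zero_of_lt (by omega), Nat.choose_eq_zero_of_lt (by omega)]
      simp
    · have h1 : m = n - 1 := by omega
      rw [if_pos h1, mul_one]
      have : ∀ i ∈ Finset.range n,
          (((i : ℝ) + 1) / ((n : ℝ) + 1) *
              (if i ≤ m then (-1 : ℝ) ^ ((n - 1 - i) - (m - i)) * ((n - 1 - i).choose (m - i) : ℝ) else 0) +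
            ((n : ℝ) - (i : ℝ)) / ((n : ℝ) + 1) *
              (if n - 1 - i ≤ m then (1 : ℝ) ^ (i - (m - (n - 1 - i))) * (i.choose (m - (n - 1 - i)) : ℝ) else 0)) = 1 := by
        intro i hi
        simp only [Finset.mem_range] at hi
        rw [if_pos (by omega : i ≤ m), if_pos (by omega : n - 1 - i ≤ m),
          (show (n - 1 - i) - (m - i) = 0 by omega), (show m - i = n - 1 - i by omega),
          (show m - (n - 1 - i) = i by omega), Nat.choose_self, Nat.choose_self]
        simp only [pow_zero, one_pow, Nat.cast_one, mul_one]
        field_simp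
        ring
      rw [Finset.sum_congr rfl this, Finset.sum_const, Finset.card_range, nsmul_eq_mul,
        mul_one, sub_self]
    · -- m = n - 2, n ≥ 2
      have h1 : ¬ (m = n - 1) := by omega
      rw [if_neg h1, mul_zero, sub_zero]
      have key : ∀ i ∈ Finset.range n,
          (((i : ℝ) + 1) / ((n : ℝ) + 1) *
              (if i ≤ m then (-1 : ℝ) ^ ((n - 1 - i) - (m - i)) * ((n - 1 - i).choose (m - i) : ℝ) else 0) +
            ((n : ℝ) - (i : ℝ)) / ((n : ℝ) + 1) *
              (if n - 1 - i ≤ m then (1 : ℝ) ^ (i - (m - (n - 1 - i))) * (i.choose (m - (n - 1 - i)) : ℝ) else 0)) =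
          (2 * (i : ℝ) - ((n : ℝ) - 1)) / ((n : ℝ) + 1) := by
        intro i hi
        simp only [Finset.mem_range] at hi
        have hfirst : (if i ≤ m then (-1 : ℝ) ^ ((n - 1 - i) - (m - i)) * ((n - 1 - i).choose (m - i) : ℝ) else 0)
            = -(((n : ℝ) - 1) - (i : ℝ)) := by
          rcases le_or_gt i m with hil | hil
          · rw [if_pos hil, (show (n - 1 - i) - (m - i) = 1 by omega),
              (show n - 1 - i = (m - i) + 1 by omega), Nat.choose_succ_self_right]
            have : (((m - i) + 1 : ℕ) : ℝ) = ((n : ℝ) - 1) - (i : ℝ) := by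
              have : (m - i) + 1 = n - 1 - i := by omega
              rw [this]
              push_cast [Nat.cast_sub (by omega : i ≤ n - 1), Nat.cast_sub (by omega : 1 ≤ n)]
              ring
            rw [this]; ring
          · rw [if_neg (by omega)]
            have : (i : ℝ) = (n : ℝ) - 1 := by
              have : i = n - 1 := by omega
              rw [this]; push_cast [Nat.cast_sub (by omega : 1 ≤ n)]; ring
            rw [this]; ring
        have hsecond : (if n - 1 - i ≤ m then (1 : ℝ) ^ (i - (m - (n - 1 - i))) * (i.choose (m - (n - 1 - i)) : ℝ) else 0)
            = (i : ℝ) := by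
          rcases Nat.eq_zero_or_pos i with hi0 | hi0
          · subst hi0
            rw [if_neg (by omega)]; simp
          · rw [if_pos (by omega), one_pow, one_mul,
              (show m - (n - 1 - i) = i - 1 by omega),
              Nat.choose_symm (by omega : 1 ≤ i), Nat.choose_one_right]
        rw [hfirst, hsecond]
        field_simp
        ring
      rw [Finset.sum_congr rfl key]
      rw [← Finset.sum_div]
      rw [Finset.sum_sub_distrib, ← Finset.mul_sum, Finset.sum_const, Finset.card_range,
        nsmul_eq_mul]
      have hgauss : (∑ i ∈ Finset.range n, (i : ℝ)) = (n : ℝ) * ((n : ℝ) - 1) / 2 := by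
        have h2 := congrArg (Nat.cast : ℕ → ℝ) (Finset.sum_range_id_mul_two n)
        push_cast [Nat.cast_sub (by omega : 1 ≤ n)] at h2
        linarith
      rw [hgauss]
      ring
  · intro j
    simp only [Polynomial.eval_sub, Polynomial.eval_finset_sum, Polynomial.eval_add,
      Polynomial.eval_mul, Polynomial.eval_pow, Polynomial.eval_C, Polynomial.eval_X,
      Polynomial.eval_one, Polynomial.eval_sub]
    ring
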